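/- For every complex number δ with |δ| ≤ 0.38, every positive integer n, and every complex number w with w² = (2+δ)·n²π², one has w ≠ 0, cosh w ≠ 0, and tanh w / w ≠ 1/(1+δ). That is, the first compatibility condition tanh(√((2+δ)n²π²))/√((2+δ)n²π²) = 1/(1+δ) has no solution; consequently λ = n²π² is never an eigenvalue of the perturbed operator T_δ for |δ| ≤ 0.38. -/

import Mathlib

open Real

/-- For every complex `δ` with `|δ| ≤ 0.38`, every positive integer `n`, and every complex
`w` with `w² = (2+δ)·n²π²`, one has `w ≠ 0`, `cosh w ≠ 0`, and `tanh w / w ≠ 1/(1+δ)`: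
the first compatibility condition `tanh(√((2+δ)n²π²))/√((2+δ)n²π²) = 1/(1+δ)` has no
solution, so `λ = n²π²` is never an eigenvalue of the perturbed operator `T_δ`. -/
theorem stmt_15 (δ : ℂ) (hδ : ‖δ‖ ≤ 0.38) (n : ℕ) (hn : 0 < n)
    (w : ℂ) (hw : w^2 = (2 + δ) * (n : ℂ)^2 * (π : ℂ)^2) :
    w ≠ 0 ∧ Complex.cosh w ≠ 0 ∧ Complex.tanh w / w ≠ 1 / (1 + δ) := by
  have hπ3 : (3:ℝ) < π := Real.pi_gt_three
  have hn1 : (1:ℝ) ≤ (n:ℝ) := by exact_mod_cast hn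
  have hδre : -0.38 ≤ δ.re := by
    have h := (abs_le.mp (le_trans (Complex.abs_re_le_norm δ) hδ)).1
    linarith
  have hw' : w^2 = (2 + δ) * ((((n:ℝ)^2 * π^2 : ℝ)) : ℂ) := by
    rw [hw]; push_cast; ring
  have hπ2 : (9:ℝ) ≤ π^2 := by nlinarith
  have hn2 : (1:ℝ) ≤ (n:ℝ)^2 := by nlinarith
  have hcpos : (9:ℝ) ≤ (n:ℝ)^2 * π^2 := by nlinarith
  have hre2 : (w^2).re = (2 + δ.re) * ((n:ℝ)^2 * π^2) := by
    rw [hw', Complex.mul_re, Complex.ofReal_re, Complex.ofReal_im]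
    simp [Complex.add_re]
  have hre3 : (w^2).re = w.re^2 - w.im^2 := by
    rw [sq, Complex.mul_re]; ring
  have hxsq : 9 ≤ w.re ^ 2 := by nlinarith [sq_nonneg w.im]
  set t := |w.re| with ht
  have ht3 : 3 ≤ t := by nlinarith [sq_abs w.re, abs_nonneg w.re]
  have htpos : 0 < t := by linarith
  have hsinht : 0 < Real.sinh t := Real.sinh_pos_iff.mpr htpos
  have hexp1 : Real.exp (-t) ≤ 1 := Real.exp_le_one_iff.mpr (by linarith)
  have hexp2 : (4:ℝ) ≤ Real.exp t := by
    have := Real.add_one_le_exp t; linarith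
  have hcw : Complex.cosh w = (Complex.exp w + Complex.exp (-w)) / 2 := by
    rw [← Complex.two_cosh]; ring
  have hsw : Complex.sinh w = (Complex.exp w - Complex.exp (-w)) / 2 := by
    rw [← Complex.two_sinh]; ring
  -- lower bound for |cosh w|
  have h3 : |Real.exp w.re - Real.exp (-w.re)| ≤ ‖Complex.exp w + Complex.exp (-w)‖ := by
    have h := abs_norm_sub_norm_le (Complex.exp w) (-Complex.exp (-w))
    simpa [Complex.norm_exp, sub_neg_eq_add, norm_neg] using h
  have hcosh_lb : Real.sinh t ≤ ‖Complex.cosh w‖ := by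
    calc Real.sinh t = |Real.sinh w.re| := (Real.abs_sinh w.re).symm
      _ = |Real.exp w.re - Real.exp (-w.re)| / 2 := by
          rw [Real.sinh_eq, abs_div]; norm_num
      _ ≤ ‖Complex.exp w + Complex.exp (-w)‖ / 2 := by linarith
      _ = ‖Complex.cosh w‖ := by rw [hcw, norm_div, Complex.norm_two]
  have hcosh0 : Complex.cosh w ≠ 0 := by
    intro h
    rw [h] at hcosh_lb
    simp at hcosh_lb
    linarith
  have hw0 : w ≠ 0 := by
    intro h
    rw [h] at hxsq
    norm_num at hxsq
  refine ⟨hw0, hcosh0, ?_⟩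
  intro heq
  -- upper bound for |sinh w|
  have hsinh_ub : ‖Complex.sinh w‖ ≤ Real.cosh t := by
    have h4 : ‖Complex.exp w - Complex.exp (-w)‖ ≤ Real.exp w.re + Real.exp (-w.re) := by
      have h := norm_sub_le (Complex.exp w) (Complex.exp (-w))
      simpa [Complex.norm_exp] using h
    calc ‖Complex.sinh w‖
        = ‖Complex.exp w - Complex.exp (-w)‖ / 2 := by
          rw [hsw, norm_div, Complex.norm_two]
      _ ≤ (Real.exp w.re + Real.exp (-w.re)) / 2 := by linarith
      _ = Real.cosh w.re := (Real.cosh_eq w.re).symm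
      _ = Real.cosh t := (Real.cosh_abs w.re).symm
  have hcoth : Real.cosh t ≤ 2 * Real.sinh t := by
    rw [Real.cosh_eq, Real.sinh_eq]
    nlinarith
  have htanh_ub : ‖Complex.tanh w‖ ≤ 2 := by
    rw [Complex.tanh_eq_sinh_div_cosh, norm_div]
    rw [div_le_iff₀ (lt_of_lt_of_le hsinht hcosh_lb)]
    calc ‖Complex.sinh w‖ ≤ Real.cosh t := hsinh_ub
      _ ≤ 2 * Real.sinh t := hcoth
      _ ≤ 2 * ‖Complex.cosh w‖ := by linarith
  have h1δ : ‖1 + δ‖ ≤ 1.38 := by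
    calc ‖1 + δ‖ ≤ ‖(1:ℂ)‖ + ‖δ‖ := norm_add_le 1 δ
      _ ≤ 1.38 := by simp; linarith
  have h1δ0 : (1 + δ) ≠ 0 := by
    intro h
    have hδ1 : δ = -1 := by linear_combination h
    rw [hδ1] at hδ
    simp at hδ
    norm_num at hδ
  rw [div_eq_div_iff hw0 h1δ0] at heq
  have habs := congrArg (‖·‖) heq
  rw [norm_mul, norm_mul, norm_one, one_mul] at habs
  have hwabs : t ≤ ‖w‖ := Complex.abs_re_le_norm w
  have h1δnn : 0 ≤ ‖1 + δ‖ := norm_nonneg _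
  have htnn : 0 ≤ ‖Complex.tanh w‖ := norm_nonneg _
  nlinarith
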